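/- Let F' be the 2×2 real matrix with rows (r_I·(1 - T⁰/T_max), (1-η)·β·T⁰) and (0, 0), and let W be the 2×2 real matrix with rows (δ, 0) and (-(1-ε)·p, c). Then W is invertible, and the eigenvalues (over ℂ) of the matrix F'·W⁻¹ are exactly 0 and R₀; in particular the spectral radius of F'·W⁻¹ equals R₀, and the (1,1) entry of F'·W⁻¹ equals R₀. -/

import Mathlib

open Set Matrix

/-- The uninfected equilibrium value `T⁰`. -/
noncomputable def hcvT0 (s rT dT Tmax : ℝ) : ℝ :=
  Tmax / (2 * rT) * (rT - dT + Real.sqrt ((rT - dT) ^ 2 + 4 * rT * s / Tmax))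

/-- The basic reproduction number `R₀` (with `1 - θ = (1-ε)(1-η)`). -/
noncomputable def hcvR0 (s rT rI dT dI Tmax β p q c η ε : ℝ) : ℝ :=
  rI / (dI + q) * (1 - hcvT0 s rT dT Tmax / Tmax)
    + (1 - ε) * (1 - η) * β * p * hcvT0 s rT dT Tmax / (c * (dI + q))

/-- The next-generation matrix `F'·W⁻¹` has eigenvalues `0` and `R₀`;
its spectral radius and `(1,1)` entry are `R₀`. -/
theorem hcv_next_generation_matrix
    (s rT rI dT dI Tmax β p q c η ε : ℝ)
    (hs : 0 < s) (hrT : 0 < rT) (hrI : 0 < rI) (hdT : 0 < dT) (hdI : 0 < dI)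
    (hTmax : 0 < Tmax) (hβ : 0 < β) (hp : 0 < p) (hq : 0 < q) (hc : 0 < c)
    (hη : η ∈ Set.Ico (0 : ℝ) 1) (hε : ε ∈ Set.Ico (0 : ℝ) 1)
    (hrIT : rI ≤ rT) (hsT : s ≤ dT * Tmax) (hdTI : dT ≤ dI)
    (F' W : Matrix (Fin 2) (Fin 2) ℝ)
    (hF : F' = !![rI * (1 - hcvT0 s rT dT Tmax / Tmax),
                  (1 - η) * β * hcvT0 s rT dT Tmax; 0, 0])
    (hW : W = !![dI + q, 0; -((1 - ε) * p), c]) :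
    IsUnit W ∧
    (∀ z : ℂ, z ∈ spectrum ℂ ((F' * W⁻¹).map (Complex.ofReal)) ↔
      z = 0 ∨ z = (hcvR0 s rT rI dT dI Tmax β p q c η ε : ℂ)) ∧
    IsGreatest ((fun z : ℂ => ‖z‖) ''
        spectrum ℂ ((F' * W⁻¹).map (Complex.ofReal)))
      (hcvR0 s rT rI dT dI Tmax β p q c η ε) ∧
    (F' * W⁻¹) 0 0 = hcvR0 s rT rI dT dI Tmax β p q c η ε := by
  obtain ⟨hη0, hη1⟩ := hη
  obtain ⟨hε0, hε1⟩ := hε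
  have hδ : 0 < dI + q := by linarith
  set T0 := hcvT0 s rT dT Tmax with hT0def
  set R0 := hcvR0 s rT rI dT dI Tmax β p q c η ε with hR0def
  -- bounds on T0
  have hsq_nonneg : (0:ℝ) ≤ (rT - dT) ^ 2 + 4 * rT * s / Tmax := by positivity
  have hsq_le : Real.sqrt ((rT - dT) ^ 2 + 4 * rT * s / Tmax) ≤ rT + dT := by
    have h1 : (rT - dT) ^ 2 + 4 * rT * s / Tmax ≤ (rT + dT) ^ 2 := by
      have : 4 * rT * s / Tmax ≤ 4 * rT * dT := by
        rw [div_le_iff₀ hTmax]; nlinarith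
      nlinarith
    calc Real.sqrt ((rT - dT) ^ 2 + 4 * rT * s / Tmax)
        ≤ Real.sqrt ((rT + dT) ^ 2) := Real.sqrt_le_sqrt h1
      _ = rT + dT := Real.sqrt_sq (by linarith)
  have hsq_ge : dT - rT ≤ Real.sqrt ((rT - dT) ^ 2 + 4 * rT * s / Tmax) := by
    have h1 : Real.sqrt ((rT - dT) ^ 2) ≤ Real.sqrt ((rT - dT) ^ 2 + 4 * rT * s / Tmax) :=
      Real.sqrt_le_sqrt (le_add_of_nonneg_right (by positivity))
    have h2 : |rT - dT| ≤ Real.sqrt ((rT - dT) ^ 2 + 4 * rT * s / Tmax) := by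
      rwa [Real.sqrt_sq_eq_abs] at h1
    have := neg_abs_le (rT - dT)
    linarith
  have hT0_nonneg : 0 ≤ T0 := by
    rw [hT0def, hcvT0]
    refine mul_nonneg (by positivity) (by linarith)
  have hT0_le : T0 ≤ Tmax := by
    rw [hT0def, hcvT0]
    have h2rT : (0:ℝ) < 2 * rT := by linarith
    calc Tmax / (2 * rT) * (rT - dT + Real.sqrt ((rT - dT) ^ 2 + 4 * rT * s / Tmax))
        ≤ Tmax / (2 * rT) * (2 * rT) := by
          apply mul_le_mul_of_nonneg_left (by linarith) (by positivity)
      _ = Tmax := by field_simp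
  have hfrac : 0 ≤ 1 - T0 / Tmax := by
    have : T0 / Tmax ≤ 1 := (div_le_one hTmax).2 hT0_le
    linarith
  have hR0_nonneg : 0 ≤ R0 := by
    rw [hR0def, hcvR0, ← hT0def]
    have h1 : 0 ≤ rI / (dI + q) * (1 - T0 / Tmax) := by positivity
    have h2 : 0 ≤ (1 - ε) * (1 - η) * β * p * T0 / (c * (dI + q)) := by
      apply div_nonneg _ (by positivity)
      have : (0:ℝ) ≤ 1 - ε := by linarith
      have : (0:ℝ) ≤ 1 - η := by linarith
      positivity
    linarith
  -- invertibility of W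
  have hdetW : W.det = (dI + q) * c := by
    rw [hW, Matrix.det_fin_two_of]; ring
  have hWunit : IsUnit W := by
    rw [Matrix.isUnit_iff_isUnit_det, hdetW, isUnit_iff_ne_zero]
    positivity
  -- explicit inverse of W
  have hWinv : W⁻¹ = !![1 / (dI + q), 0; (1 - ε) * p / ((dI + q) * c), 1 / c] := by
    apply inv_eq_right_inv
    rw [hW, Matrix.mul_fin_two]
    ext i j
    fin_cases i <;> fin_cases j <;>
      simp [Matrix.one_apply] <;> field_simp <;> ring
  -- the next generation matrix
  have hM : F' * W⁻¹ = !![R0, (1 - η) * β * T0 / c; 0, 0] := by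
    rw [hF, hWinv, Matrix.mul_fin_two, hR0def, hcvR0, ← hT0def]
    ext i j
    fin_cases i <;> fin_cases j <;> simp <;> ring
  have hentry : (F' * W⁻¹) 0 0 = R0 := by rw [hM]; simp
  -- the complex matrix
  set b : ℝ := (1 - η) * β * T0 / c with hb
  have hmap : (F' * W⁻¹).map (Complex.ofReal) = !![(R0 : ℂ), (b : ℂ); 0, 0] := by
    rw [hM]
    ext i j
    fin_cases i <;> fin_cases j <;> simp [Matrix.map_apply]
  -- spectrum characterization
  have hspec : ∀ z : ℂ, z ∈ spectrum ℂ ((F' * W⁻¹).map (Complex.ofReal)) ↔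
      z = 0 ∨ z = (R0 : ℂ) := by
    intro z
    rw [hmap, spectrum.mem_iff, Matrix.isUnit_iff_isUnit_det, isUnit_iff_ne_zero,
      not_ne_iff]
    have halg : (algebraMap ℂ (Matrix (Fin 2) (Fin 2) ℂ)) z - !![(R0 : ℂ), (b : ℂ); 0, 0]
        = !![z - (R0 : ℂ), -(b : ℂ); 0, z] := by
      rw [Algebra.algebraMap_eq_smul_one]
      ext i j
      fin_cases i <;> fin_cases j <;>
        simp [Matrix.smul_apply, Matrix.one_apply, Matrix.sub_apply]
    rw [halg, Matrix.det_fin_two_of]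
    constructor
    · intro h
      have h' : (z - (R0 : ℂ)) * z = 0 := by linear_combination h
      rcases mul_eq_zero.1 h' with h1 | h1
      · exact Or.inr (sub_eq_zero.1 h1)
      · exact Or.inl h1
    · rintro (rfl | rfl) <;> ring
  refine ⟨hWunit, hspec, ?_, hentry⟩
  constructor
  · refine ⟨(R0 : ℂ), (hspec _).2 (Or.inr rfl), ?_⟩
    simp [Complex.norm_real, abs_of_nonneg hR0_nonneg]
  · rintro x ⟨z, hz, rfl⟩
    rcases (hspec z).1 hz with rfl | rfl
    · simpa using hR0_nonneg
    · simp [Complex.norm_real, abs_of_nonneg hR0_nonneg]
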